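/- For all nonnegative reals $x, y$ and every integer $k \geq 2$, with $q_k = \log_2(2^k+2)$, we have $2 x^{q_k/2} y^{q_k/2} + (x^{q_k/k} + y^{q_k/k})^k \leq (x+y)^{q_k}$. -/

import Mathlib

open Real


lemma holder2 {A B C D θ : ℝ} (hA : 0 ≤ A) (hB : 0 ≤ B) (hC : 0 ≤ C) (hD : 0 ≤ D)
    (hθ0 : 0 < θ) (hθ1 : θ < 1) :
    A ^ θ * B ^ (1 - θ) + C ^ θ * D ^ (1 - θ) ≤ (A + C) ^ θ * (B + D) ^ (1 - θ) := by
  rcases eq_or_lt_of_le (by positivity : (0:ℝ) ≤ A + C) with hS | hS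
  · have hA0 : A = 0 := by linarith [hC, hA]
    have hC0 : C = 0 := by linarith [hC, hA]
    simp [hA0, hC0, Real.zero_rpow (ne_of_gt hθ0)]
  rcases eq_or_lt_of_le (by positivity : (0:ℝ) ≤ B + D) with hT | hT
  · have hB0 : B = 0 := by linarith
    have hD0 : D = 0 := by linarith
    simp [hB0, hD0, Real.zero_rpow (by linarith : (1:ℝ) - θ ≠ 0)]
  set S := A + C with hSdef
  set T := B + D with hTdef
  have key : ∀ a b : ℝ, 0 ≤ a → 0 ≤ b →
      a ^ θ * b ^ (1 - θ) ≤ S ^ θ * T ^ (1 - θ) * (θ * (a / S) + (1 - θ) * (b / T)) := by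
    intro a b ha hb
    have h1 : a ^ θ * b ^ (1 - θ)
        = S ^ θ * T ^ (1 - θ) * ((a / S) ^ θ * (b / T) ^ (1 - θ)) := by
      rw [Real.div_rpow ha hS.le, Real.div_rpow hb hT.le]
      field_simp
    rw [h1]
    have h2 := Real.geom_mean_le_arith_mean2_weighted hθ0.le (by linarith : (0:ℝ) ≤ 1 - θ)
      (by positivity : (0:ℝ) ≤ a / S) (by positivity : (0:ℝ) ≤ b / T) (by ring)
    have h3 : (0:ℝ) ≤ S ^ θ * T ^ (1 - θ) := by positivity
    nlinarith [h2, h3]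
  have k1 := key A B hA hB
  have k2 := key C D hC hD
  have hsum : θ * (A / S) + (1 - θ) * (B / T) + (θ * (C / S) + (1 - θ) * (D / T)) = 1 := by
    field_simp
    ring
  have h3 : (0:ℝ) ≤ S ^ θ * T ^ (1 - θ) := by positivity
  nlinarith [k1, k2]


set_option maxHeartbeats 1000000 in
lemma key1d {q μ : ℝ} (hq : 2 < q) (hμ0 : 0 < μ) (hμ1 : μ < 1)
    (hK : μ ≤ ((2:ℝ) ^ μ - 1) * (q / 2)) :
    ∀ b ∈ Set.Icc (1:ℝ) 2, ((2:ℝ) ^ μ - 1) * (2 - b) ^ (q/2) + b ^ μ ≤ (2:ℝ) ^ μ := by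
  have hK2 : (0:ℝ) < (2:ℝ) ^ μ - 1 := by
    have h2 : (2:ℝ) ^ (0:ℝ) < (2:ℝ) ^ μ :=
      Real.rpow_lt_rpow_left_iff (by norm_num : (1:ℝ) < 2) |>.2 hμ0
    simp at h2; linarith
  set K₂ : ℝ := (2:ℝ) ^ μ - 1 with hK2def
  set F : ℝ → ℝ := fun b => (2:ℝ) ^ μ - b ^ μ - K₂ * (2 - b) ^ (q/2) with hFdef
  suffices hs : ∀ b ∈ Set.Icc (1:ℝ) 2, 0 ≤ F b by
    intro b hb
    have := hs b hb
    simp only [hFdef] at this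
    linarith
  -- basic values
  have hF1 : F 1 = 0 := by
    simp only [hFdef]
    norm_num
    linarith [hK2def]
  have hF2 : F 2 = 0 := by
    simp only [hFdef]
    norm_num [Real.zero_rpow (show q/2 ≠ 0 by positivity)]
  -- continuity
  have c1 : Continuous fun b : ℝ => b ^ μ :=
    continuous_iff_continuousAt.2 fun x => Real.continuousAt_rpow_const x μ (Or.inr hμ0.le)
  have c2 : Continuous fun b : ℝ => (2 - b) ^ (q/2) := by
    have hc : Continuous fun b : ℝ => (2 : ℝ) - b := by continuity
    exact continuous_iff_continuousAt.2 fun x =>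
      (Real.continuousAt_rpow_const _ (q/2) (Or.inr (by positivity))).comp hc.continuousAt
  have hFcont : Continuous F := by
    simp only [hFdef]
    exact (continuous_const.sub c1).sub (continuous_const.mul c2)
  -- derivative of F
  set F' : ℝ → ℝ := fun b => K₂ * (q/2) * (2 - b) ^ (q/2 - 1) - μ * b ^ (μ - 1) with hF'def
  have hder : ∀ b : ℝ, b ≠ 0 → HasDerivAt F (F' b) b := by
    intro b hb
    have d1 : HasDerivAt (fun b : ℝ => b ^ μ) (μ * b ^ (μ - 1)) b :=
      Real.hasDerivAt_rpow_const (Or.inl hb)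
    have d2 : HasDerivAt (fun b : ℝ => (2 - b) ^ (q/2)) ((-1) * (q/2) * (2 - b) ^ (q/2 - 1)) b := by
      have hid : HasDerivAt (fun b : ℝ => (2:ℝ) - b) (-1) b := by
        simpa using (hasDerivAt_id b).const_sub 2
      exact hid.rpow_const (Or.inr (by linarith))
    have := ((hasDerivAt_const b ((2:ℝ) ^ μ)).sub d1).sub (d2.const_mul K₂)
    refine this.congr_deriv ?_
    simp only [hF'def]
    ring
  -- the log-comparison function
  set h : ℝ → ℝ := fun b => (q/2 - 1) * Real.log (2 - b) + (1 - μ) * Real.log b with hhdef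
  have hher : ∀ b : ℝ, 0 < b → b < 2 →
      HasDerivAt h ((q/2 - 1) * (-1 / (2 - b)) + (1 - μ) * (1 / b)) b := by
    intro b hb0 hb2
    have hid : HasDerivAt (fun b : ℝ => (2:ℝ) - b) (-1) b := by
      simpa using (hasDerivAt_id b).const_sub 2
    have d1 : HasDerivAt (fun b : ℝ => Real.log (2 - b)) (-1 / (2 - b)) b :=
      hid.log (by linarith)
    have d2 : HasDerivAt Real.log (1 / b) b := by
      simpa [one_div] using Real.hasDerivAt_log (ne_of_gt hb0)
    exact (d1.const_mul _).add (d2.const_mul _)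
  -- derivative formula for h, nicer form
  have hderh : ∀ b : ℝ, 0 < b → b < 2 →
      HasDerivAt h ((2 * (1 - μ) - b * (q/2 - μ)) / (b * (2 - b))) b := by
    intro b hb0 hb2
    have hb0' : b ≠ 0 := ne_of_gt hb0
    have hb2' : (2:ℝ) - b ≠ 0 := by linarith
    have e : (q/2 - 1) * (-1 / (2 - b)) + (1 - μ) * (1 / b)
        = (2 * (1 - μ) - b * (q/2 - μ)) / (b * (2 - b)) := by
      field_simp
      ring
    exact e ▸ hher b hb0 hb2
  set L : ℝ := Real.log (K₂ * (q/2)) with hLdef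
  -- sign characterization of F'
  have lemchar : ∀ b : ℝ, 1 ≤ b → b < 2 →
      (F' b < 0 ↔ L + h b < Real.log μ) ∧ (F' b = 0 → L + h b = Real.log μ) := by
    intro b hb1 hb2
    have hb0 : (0:ℝ) < b := by linarith
    have h2b : (0:ℝ) < 2 - b := by linarith
    have e1 : K₂ * (q/2) * (2 - b) ^ (q/2 - 1) = Real.exp (L + Real.log (2 - b) * (q/2 - 1)) := by
      rw [Real.exp_add, hLdef, Real.exp_log (by positivity), ← Real.rpow_def_of_pos h2b]
    have e2 : μ * b ^ (μ - 1) = Real.exp (Real.log μ + Real.log b * (μ - 1)) := by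
      rw [Real.exp_add, Real.exp_log hμ0, ← Real.rpow_def_of_pos hb0]
    constructor
    · constructor
      · intro hlt
        have hee : Real.exp (L + Real.log (2 - b) * (q/2 - 1))
            < Real.exp (Real.log μ + Real.log b * (μ - 1)) := by
          rw [← e1, ← e2]; simp only [hF'def] at hlt; linarith
        have := Real.exp_lt_exp.1 hee
        simp only [hhdef]; nlinarith [this]
      · intro hlt
        have hlt2 : L + Real.log (2 - b) * (q/2 - 1) < Real.log μ + Real.log b * (μ - 1) := by
          simp only [hhdef] at hlt; nlinarith [hlt]
        have := Real.exp_lt_exp.2 hlt2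
        rw [← e1, ← e2] at this
        simp only [hF'def]; linarith
    · intro heq
      have hee : Real.exp (L + Real.log (2 - b) * (q/2 - 1))
          = Real.exp (Real.log μ + Real.log b * (μ - 1)) := by
        rw [← e1, ← e2]; simp only [hF'def] at heq; linarith
      have := Real.exp_eq_exp.1 hee
      simp only [hhdef]; nlinarith [this]
  -- main argument by contradiction
  by_contra hcon
  push_neg at hcon
  obtain ⟨x0, hx0mem, hFx0⟩ := hcon
  obtain ⟨c, hcmem, hcmin⟩ := (isCompact_Icc : IsCompact (Set.Icc (1:ℝ) 2)).exists_isMinOn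
    (Set.nonempty_Icc.2 (by norm_num)) hFcont.continuousOn
  have hFc : F c < 0 := lt_of_le_of_lt (hcmin hx0mem) hFx0
  have hc1 : 1 < c := by
    rcases eq_or_lt_of_le hcmem.1 with heq | h
    · exfalso; rw [← heq] at hFc; linarith
    · exact h
  have hc2 : c < 2 := by
    rcases eq_or_lt_of_le hcmem.2 with heq | h
    · exfalso; rw [heq] at hFc; linarith
    · exact h
  have hc0 : (0:ℝ) < c := by linarith
  have hlocal : IsLocalMin F c := hcmin.isLocalMin (Icc_mem_nhds hc1 hc2)
  have hderc : F' c = 0 := by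
    have := (hder c (ne_of_gt hc0)).deriv
    rw [← this]; exact hlocal.deriv_eq_zero
  have hhc : L + h c = Real.log μ := (lemchar c hc1.le hc2).2 hderc
  have hlogμL : Real.log μ ≤ L := Real.log_le_log hμ0 hK
  set bst : ℝ := 2 * (1 - μ) / (q/2 - μ) with hbstdef
  have hqμ : (0:ℝ) < q/2 - μ := by linarith
  -- claim : bst ≤ c
  have hcb : bst ≤ c := by
    by_contra hlt
    push_neg at hlt
    have h1bst : (1:ℝ) < bst := lt_trans hc1 hlt
    have hbst2 : bst < 2 := by
      rw [hbstdef, div_lt_iff₀ hqμ]; linarith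
    have hmono : StrictMonoOn h (Set.Icc 1 bst) := by
      apply strictMonoOn_of_deriv_pos (convex_Icc _ _)
      · apply ContinuousOn.add
        · apply ContinuousOn.mul continuousOn_const
          apply ContinuousOn.log (by fun_prop)
          intro z hz
          have h1 : (1:ℝ) ≤ z := hz.1
          have h2 : z ≤ bst := hz.2
          have : z < 2 := lt_of_le_of_lt h2 hbst2
          intro h0; linarith [h0]
        · apply ContinuousOn.mul continuousOn_const
          apply ContinuousOn.log (by fun_prop)
          intro z hz h0
          have h1 : (1:ℝ) ≤ z := hz.1
          rw [h0] at h1; norm_num at h1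
      · intro z hz
        rw [interior_Icc] at hz
        have hz0 : (0:ℝ) < z := by linarith [hz.1]
        have hz2 : z < 2 := lt_trans hz.2 hbst2
        rw [(hderh z hz0 hz2).deriv]
        apply div_pos
        · have hzb : z < bst := hz.2
          have : z * (q/2 - μ) < 2 * (1 - μ) := by
            have h1 : z * (q/2 - μ) < bst * (q/2 - μ) :=
              mul_lt_mul_of_pos_right hzb hqμ
            have h2 : bst * (q/2 - μ) = 2 * (1 - μ) :=
              div_mul_cancel₀ _ (ne_of_gt hqμ)
            linarith
          linarith
        · have : (0:ℝ) < 2 - z := by linarith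
          positivity
    have hhc_gt : h 1 < h c := hmono (Set.mem_Icc.2 ⟨le_refl 1, h1bst.le⟩)
      (Set.mem_Icc.2 ⟨hc1.le, hlt.le⟩) hc1
    have hh1 : h 1 = 0 := by
      show (q/2 - 1) * Real.log (2 - 1) + (1 - μ) * Real.log 1 = 0
      norm_num
    linarith
  -- F strictly decreasing on [c, 2]
  have hanti_h : StrictAntiOn h (Set.Ico c 2) := by
    apply strictAntiOn_of_deriv_neg (convex_Ico _ _)
    · apply ContinuousOn.add
      · apply ContinuousOn.mul continuousOn_const
        apply ContinuousOn.log (by fun_prop)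
        intro z hz h0
        have : z < 2 := hz.2
        linarith [h0]
      · apply ContinuousOn.mul continuousOn_const
        apply ContinuousOn.log (by fun_prop)
        intro z hz h0
        have : c ≤ z := hz.1
        linarith [hc0]
    · intro z hz
      rw [interior_Ico] at hz
      have hz0 : (0:ℝ) < z := by linarith [hz.1]
      have hz2 : z < 2 := hz.2
      rw [(hderh z hz0 hz2).deriv]
      apply div_neg_of_neg_of_pos
      · have hzb : bst < z := lt_of_le_of_lt hcb hz.1
        have h1 : bst * (q/2 - μ) < z * (q/2 - μ) := mul_lt_mul_of_pos_right hzb hqμ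
        have h2 : bst * (q/2 - μ) = 2 * (1 - μ) :=
          div_mul_cancel₀ _ (ne_of_gt hqμ)
        linarith
      · have : (0:ℝ) < 2 - z := by linarith
        positivity
  have hantiF : StrictAntiOn F (Set.Icc c 2) := by
    apply strictAntiOn_of_deriv_neg (convex_Icc _ _) hFcont.continuousOn
    intro z hz
    rw [interior_Icc] at hz
    have hz1 : 1 ≤ z := by linarith [hz.1]
    have hz2 : z < 2 := hz.2
    have hz0 : z ≠ 0 := by intro h0; rw [h0] at hz1; norm_num at hz1
    rw [(hder z hz0).deriv]
    apply (lemchar z hz1 hz2).1.2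
    have hhz : h z < h c := hanti_h (Set.mem_Ico.2 ⟨le_refl c, hc2⟩)
      (Set.mem_Ico.2 ⟨hz.1.le, hz2⟩) hz.1
    linarith [hhc]
  have : F 2 < F c := hantiF (Set.mem_Icc.2 ⟨le_refl c, hc2.le⟩)
    (Set.mem_Icc.2 ⟨hc2.le, le_refl 2⟩) hc2
  rw [hF2] at this
  linarith

set_option maxHeartbeats 1000000 in
theorem higher_energy_two_var_ineq (k : ℕ) (hk : 2 ≤ k) (x y : ℝ) (hx : 0 ≤ x) (hy : 0 ≤ y) :
    2 * x ^ (Real.logb 2 (2^k + 2) / 2) * y ^ (Real.logb 2 (2^k + 2) / 2)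
      + (x ^ (Real.logb 2 (2^k + 2) / k) + y ^ (Real.logb 2 (2^k + 2) / k)) ^ k
      ≤ (x + y) ^ (Real.logb 2 (2^k + 2)) := by
  have hkR : (2:ℝ) ≤ (k:ℝ) := by exact_mod_cast hk
  have hkpos : (0:ℝ) < (k:ℝ) := by linarith
  have hkne : k ≠ 0 := by omega
  have hk2 : (4:ℝ) ≤ 2^k := by
    calc (4:ℝ) = 2^2 := by norm_num
    _ ≤ 2^k := pow_le_pow_right₀ (by norm_num) hk
  have h2kpos : (0:ℝ) < 2^k := by positivity
  have hpos : (0:ℝ) < 2^k + 2 := by linarith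
  set q : ℝ := Real.logb 2 (2^k + 2) with hqdef
  have h2q : (2:ℝ) ^ q = 2^k + 2 := Real.rpow_logb (by norm_num) (by norm_num) hpos
  have hq2 : 2 < q := by
    rw [hqdef]
    apply (Real.lt_logb_iff_rpow_lt (by norm_num) hpos).2
    norm_num; linarith
  have hqk : (k:ℝ) < q := by
    rw [hqdef]
    apply (Real.lt_logb_iff_rpow_lt (by norm_num) hpos).2
    rw [Real.rpow_natCast]
    linarith
  have hqk1 : q < (k:ℝ) + 1 := by
    rw [hqdef]
    apply (Real.logb_lt_iff_lt_rpow (by norm_num) hpos).2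
    rw [show ((k:ℝ) + 1) = ((k+1 : ℕ):ℝ) by push_cast; ring, Real.rpow_natCast, pow_succ]
    linarith
  set μ : ℝ := q - k with hμdef
  have hμ0 : 0 < μ := by simp only [hμdef]; linarith
  have hμ1 : μ < 1 := by simp only [hμdef]; linarith
  have h2μ : (2:ℝ) ^ μ = (2^k + 2) / 2^k := by
    rw [hμdef, Real.rpow_sub (by norm_num), h2q, Real.rpow_natCast]
  have hK2eq : (2:ℝ) ^ μ - 1 = 2 / 2^k := by
    rw [h2μ]; field_simp; ring
  -- the crucial numeric condition
  have hK : μ ≤ ((2:ℝ) ^ μ - 1) * (q / 2) := by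
    rw [hK2eq]
    rw [show (2:ℝ)/2^k * (q/2) = q / 2^k by field_simp]
    rw [le_div_iff₀ h2kpos]
    -- goal : μ * 2^k ≤ q
    rcases eq_or_lt_of_le hk with hk2' | hk3
    · -- k = 2
      have hkk : k = 2 := hk2'.symm
      subst hkk
      have hq83 : q ≤ 8/3 := by
        rw [hqdef]
        apply (Real.logb_le_iff_le_rpow (by norm_num) (by positivity)).2
        have hcube : ((2:ℝ)^((8:ℝ)/3))^(3:ℕ) = 2^(8:ℕ) := by
          rw [← Real.rpow_natCast ((2:ℝ)^((8:ℝ)/3)) 3, ← Real.rpow_mul (by norm_num)]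
          rw [show (8:ℝ)/3*((3:ℕ):ℝ) = ((8:ℕ):ℝ) by push_cast; ring, Real.rpow_natCast]
        apply le_of_pow_le_pow_left₀ (show (3:ℕ) ≠ 0 by norm_num) (by positivity)
        rw [hcube]
        norm_num
      simp only [hμdef]
      push_cast
      nlinarith
    · -- k ≥ 3
      have hk3R : (3:ℝ) ≤ (k:ℝ) := by exact_mod_cast hk3
      have hμlogb : μ = Real.log ((2^k+2)/2^k) / Real.log 2 := by
        rw [← Real.logb, ← h2μ, Real.logb_rpow (by norm_num) (by norm_num)]
      have hlog_le : Real.log ((2^k+2)/2^k) ≤ 2/2^k := by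
        have h1 := Real.log_le_sub_one_of_pos (show (0:ℝ) < (2^k+2)/2^k by positivity)
        have h2 : ((2:ℝ)^k+2)/2^k - 1 = 2/2^k := by field_simp; ring
        linarith
      have hlog2 : (0.6931471803:ℝ) < Real.log 2 := Real.log_two_gt_d9
      have hμle : μ ≤ (2/2^k) / Real.log 2 := by
        rw [hμlogb]
        gcongr
      have h1 : μ * 2^k ≤ 2 / Real.log 2 := by
        have h2 := mul_le_mul_of_nonneg_right hμle (le_of_lt h2kpos)
        have h3 : (2/2^k) / Real.log 2 * 2^k = 2 / Real.log 2 := by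
          field_simp
        linarith
      have h2 : 2 / Real.log 2 < 3 := by
        rw [div_lt_iff₀ (by linarith)]; nlinarith
      nlinarith [h1, h2, hk3R, hqk]
  -- trivial case x + y = 0
  rcases eq_or_lt_of_le (add_nonneg hx hy) with hs0 | hs
  · have hx0 : x = 0 := by linarith
    have hy0 : y = 0 := by linarith
    subst hx0; subst hy0
    rw [Real.zero_rpow (by positivity : q/2 ≠ 0),
        Real.zero_rpow (by positivity : q/(k:ℝ) ≠ 0)]
    norm_num
    rw [Real.zero_rpow (by positivity : q ≠ 0), zero_pow hkne]
  -- main case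
  set θ : ℝ := (2*k - q)/k with hθdef
  have hθ0 : 0 < θ := by
    apply div_pos _ hkpos
    linarith
  have hθ1 : θ < 1 := by
    rw [hθdef, div_lt_one hkpos]
    linarith
  have h1θ : 1 - θ = μ / k := by
    rw [hθdef, hμdef]; field_simp; ring
  have hterm : ∀ z : ℝ, 0 ≤ z → z^θ * (z^(2:ℕ))^(1-θ) = z^(q/(k:ℝ)) := by
    intro z hz
    have hexp : θ + ((2:ℕ):ℝ)*(1-θ) = q/(k:ℝ) := by
      rw [hθdef]; push_cast; field_simp; ring
    calc z^θ * (z^(2:ℕ))^(1-θ) = z^θ * z^(((2:ℕ):ℝ)*(1-θ)) := by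
          rw [← Real.rpow_natCast z 2, ← Real.rpow_mul hz]
      _ = z^(θ + ((2:ℕ):ℝ)*(1-θ)) := by
          rw [Real.rpow_add' hz (by rw [hexp]; positivity)]
      _ = z^(q/(k:ℝ)) := by rw [hexp]
  have hold := holder2 hx (by positivity : (0:ℝ) ≤ x^(2:ℕ)) hy
    (by positivity : (0:ℝ) ≤ y^(2:ℕ)) hθ0 hθ1
  rw [hterm x hx, hterm y hy] at hold
  have step1 : (x^(q/(k:ℝ)) + y^(q/(k:ℝ)))^k
      ≤ (x+y)^(2*(k:ℝ)-q) * (x^(2:ℕ)+y^(2:ℕ))^μ := by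
    have h1 := pow_le_pow_left₀ (by positivity) hold k
    have h2 : ((x+y)^θ * (x^(2:ℕ)+y^(2:ℕ))^(1-θ))^k
        = (x+y)^(2*(k:ℝ)-q) * (x^(2:ℕ)+y^(2:ℕ))^μ := by
      rw [mul_pow,
        ← Real.rpow_natCast ((x+y)^θ) k, ← Real.rpow_mul hs.le,
        ← Real.rpow_natCast ((x^(2:ℕ)+y^(2:ℕ))^(1-θ)) k, ← Real.rpow_mul (by positivity)]
      congr 1
      · congr 1
        rw [hθdef]; field_simp
      · congr 1
        rw [h1θ]; field_simp
    rw [h2] at h1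
    exact h1
  -- rewrite the first term
  have hfirst : 2 * x^(q/2) * y^(q/2) = 2*(x*y)^(q/2) := by
    rw [Real.mul_rpow hx hy]; ring
  set b : ℝ := 2*(x^(2:ℕ)+y^(2:ℕ))/(x+y)^(2:ℕ) with hbdef
  have hb1 : 1 ≤ b := by
    rw [hbdef, le_div_iff₀ (by positivity)]
    nlinarith [sq_nonneg (x-y)]
  have hb2 : b ≤ 2 := by
    rw [hbdef, div_le_iff₀ (by positivity)]
    nlinarith [mul_nonneg hx hy]
  have hxyeq : x*y = (x+y)^(2:ℕ)*(2-b)/4 := by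
    rw [hbdef]; field_simp; ring
  have hsqeq : x^(2:ℕ)+y^(2:ℕ) = (x+y)^(2:ℕ)*b/2 := by
    rw [hbdef]; field_simp
  have hS2 : ((x+y)^(2:ℕ):ℝ)^(q/2) = (x+y)^q := by
    rw [← Real.rpow_natCast (x+y) 2, ← Real.rpow_mul hs.le]
    congr 1; push_cast; ring
  have hS2μ : ((x+y)^(2:ℕ):ℝ)^μ = (x+y)^(2*μ) := by
    rw [← Real.rpow_natCast (x+y) 2, ← Real.rpow_mul hs.le]
    congr 1 <;> push_cast <;> ring_nf
  have h4q : (4:ℝ)^(q/2) = 2^k+2 := by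
    rw [show (4:ℝ) = (2:ℝ)^(2:ℝ) by norm_num, ← Real.rpow_mul (by norm_num)]
    rw [show (2:ℝ)*(q/2) = q by ring, h2q]
  have term1 : 2*(x*y)^(q/2) = (x+y)^q * (2*(2-b)^(q/2)/(2^k+2)) := by
    rw [hxyeq, show (x+y)^(2:ℕ)*(2-b)/4 = ((x+y)^(2:ℕ)) * ((2-b)/4) by ring,
      Real.mul_rpow (by positivity) (by nlinarith : (0:ℝ) ≤ (2-b)/4), hS2,
      Real.div_rpow (by linarith : (0:ℝ) ≤ 2-b) (by norm_num : (0:ℝ) ≤ 4), h4q]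
    ring
  have term2 : (x+y)^(2*(k:ℝ)-q) * (x^(2:ℕ)+y^(2:ℕ))^μ
      = (x+y)^q * (2^k*b^μ/(2^k+2)) := by
    rw [hsqeq, show (x+y)^(2:ℕ)*b/2 = ((x+y)^(2:ℕ))*(b/2) by ring,
      Real.mul_rpow (by positivity) (by nlinarith : (0:ℝ) ≤ b/2), hS2μ,
      Real.div_rpow (by linarith : (0:ℝ) ≤ b) (by norm_num : (0:ℝ) ≤ 2), h2μ]
    rw [show (x+y)^(2*(k:ℝ)-q) * ((x+y)^(2*μ) * (b^μ / ((2^k+2)/2^k)))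
        = ((x+y)^(2*(k:ℝ)-q) * (x+y)^(2*μ)) * (b^μ * 2^k/(2^k+2)) by field_simp,
      ← Real.rpow_add hs]
    rw [show 2*(k:ℝ)-q + 2*μ = q by rw [hμdef]; ring]
    ring
  have hkey := key1d hq2 hμ0 hμ1 hK b ⟨hb1, hb2⟩
  rw [hK2eq, h2μ] at hkey
  have hPnn : (0:ℝ) ≤ (2-b)^(q/2) := Real.rpow_nonneg (by linarith) _
  have hBnn : (0:ℝ) ≤ b^μ := Real.rpow_nonneg (by linarith) _
  have hbound : 2*(2-b)^(q/2) + 2^k*b^μ ≤ 2^k+2 := by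
    have := mul_le_mul_of_nonneg_left hkey (le_of_lt h2kpos)
    have e1 : (2:ℝ)^k * (2/2^k*(2-b)^(q/2) + b^μ) = 2*(2-b)^(q/2) + 2^k*b^μ := by
      field_simp
    have e2 : (2:ℝ)^k * ((2^k+2)/2^k) = 2^k+2 := by field_simp
    linarith [e1 ▸ e2 ▸ this]
  calc 2 * x^(q/2) * y^(q/2) + (x^(q/(k:ℝ)) + y^(q/(k:ℝ)))^k
      ≤ 2*(x*y)^(q/2) + (x+y)^(2*(k:ℝ)-q) * (x^(2:ℕ)+y^(2:ℕ))^μ := by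
        rw [hfirst]; exact add_le_add_right step1 _
    _ = (x+y)^q * ((2*(2-b)^(q/2) + 2^k*b^μ)/(2^k+2)) := by
        rw [term1, term2]; ring
    _ ≤ (x+y)^q * 1 := by
        apply mul_le_mul_of_nonneg_left _ (by positivity)
        rw [div_le_one hpos]
        exact hbound
    _ = (x+y)^q := mul_one _
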